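/- Let d = (7 − √21)/14. Let a, b be real numbers with a ∈ [0, d] and b ∈ [0, d]. Define Ŵ₉(a,b) = (1−d−a)·(d−a)/((1−2d−a)·(1−2d)) + (1−d−a)²·(1−2d−a)·(d−b)/((1−2d−a−b)·(1−2d−b)·(1−2d)·(1−d−b)) + (1−d−a)·(d−a)/((1−2d−a−b)·(1−2d)). Then Ŵ₉(a,b) ≤ Ŵ₉(0,b). -/
import Mathlib


/-- The objective function `Ŵ₉` of program (P9). -/
noncomputable def W9hat (d a b : ℝ) : ℝ :=
  (1 - d - a) * (d - a) / ((1 - 2 * d - a) * (1 - 2 * d))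
    + (1 - d - a) ^ 2 * (1 - 2 * d - a) * (d - b) /
        ((1 - 2 * d - a - b) * (1 - 2 * d - b) * (1 - 2 * d) * (1 - d - b))
    + (1 - d - a) * (d - a) / ((1 - 2 * d - a - b) * (1 - 2 * d))

private lemma aux_key1 (d a : ℝ) (hdl : (0.17:ℝ) < d) (hdu : d < 0.18)
    (ha0 : 0 ≤ a) (had : a ≤ d) :
    (1 - d - a) * (d - a) * (1 - 2 * d) ≤ (1 - d) * d * (1 - 2 * d - a) := by
  have hd0 : (0:ℝ) ≤ d := by linarith
  have hX1 : 0 ≤ 1 - 3 * d + d ^ 2 - a * (1 - 2 * d) := by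
    nlinarith [mul_nonneg ha0 hd0, sq_nonneg d]
  nlinarith [mul_nonneg ha0 hX1]

private lemma aux_key3 (d a b : ℝ) (hdl : (0.17:ℝ) < d) (hdu : d < 0.18)
    (ha0 : 0 ≤ a) (had : a ≤ d) (hb0 : 0 ≤ b) (hbd : b ≤ d) :
    (1 - d - a) * (d - a) * (1 - 2 * d - b) ≤ (1 - d) * d * (1 - 2 * d - a - b) := by
  have hd0 : (0:ℝ) ≤ d := by linarith
  have hX3 : 0 ≤ 1 - 3 * d + d ^ 2 - a * (1 - 2 * d) - b * (1 - a) := by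
    nlinarith [mul_nonneg ha0 hd0, mul_nonneg hb0 ha0, sq_nonneg d]
  nlinarith [mul_nonneg ha0 hX3]

private lemma aux_keyS (d a b : ℝ) (hdl : (0.17:ℝ) < d) (hdu : d < 0.18)
    (ha0 : 0 ≤ a) (had : a ≤ d) (hb0 : 0 ≤ b) (hbd : b ≤ d) :
    0 ≤ 2 - 3*b - 3*a + 3*a*b + a^2 - a^2*b - 10*d + 8*d*b + 10*d*a - 4*d*a*b
      - 2*d*a^2 + 16*d^2 - 5*d^2*b - 8*d^2*a - 8*d^3 := by
  have hd0 : (0:ℝ) ≤ d := by linarith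
  nlinarith [mul_nonneg ha0 hb0, mul_nonneg (mul_nonneg ha0 ha0) hb0,
    mul_nonneg (mul_nonneg hb0 (sub_nonneg.2 hdu.le)) hd0,
    mul_nonneg (mul_nonneg ha0 (sub_nonneg.2 hdu.le)) hd0,
    mul_nonneg (mul_nonneg ha0 hb0) hd0, sq_nonneg a, sq_nonneg (d - 0.175),
    mul_nonneg (mul_nonneg hd0 hd0) (sub_nonneg.2 hdu.le)]

private lemma aux_keyP2 (d a b : ℝ) (hdl : (0.17:ℝ) < d) (hdu : d < 0.18)
    (ha0 : 0 ≤ a) (had : a ≤ d) (hb0 : 0 ≤ b) (hbd : b ≤ d) :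
    (1 - d - a) ^ 2 * (1 - 2 * d - a) * (1 - 2 * d - b) ≤
      (1 - d) ^ 2 * (1 - 2 * d) * (1 - 2 * d - a - b) := by
  nlinarith [mul_nonneg ha0 (aux_keyS d a b hdl hdu ha0 had hb0 hbd)]

/-- Under the constraints of program (P9) with `d = (7−√21)/14`,
the objective `Ŵ₉` does not decrease when `a` is replaced by `0`. -/
theorem W9hat_le (d a b : ℝ)
    (hd : d = (7 - Real.sqrt 21) / 14)
    (ha : a ∈ Set.Icc 0 d) (hb : b ∈ Set.Icc 0 d) :
    W9hat d a b ≤ W9hat d 0 b := by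
  obtain ⟨ha0, had⟩ := ha
  obtain ⟨hb0, hbd⟩ := hb
  have hsq : Real.sqrt 21 ^ 2 = 21 := Real.sq_sqrt (by norm_num)
  have hsnn : 0 ≤ Real.sqrt 21 := Real.sqrt_nonneg 21
  have hsl : (4.48:ℝ) < Real.sqrt 21 := by nlinarith
  have hsu : Real.sqrt 21 < 4.62 := by nlinarith
  have hdl : (0.17:ℝ) < d := by rw [hd]; linarith
  have hdu : d < 0.18 := by rw [hd]; linarith
  clear hd hsq hsnn hsl hsu
  have h1 : 0 < 1 - 2 * d := by linarith
  have h2 : 0 < 1 - 2 * d - a := by linarith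
  have h20 : 0 < 1 - 2 * d - 0 := by linarith
  have h3 : 0 < 1 - 2 * d - b := by linarith
  have h4 : 0 < 1 - 2 * d - a - b := by linarith
  have h40 : 0 < 1 - 2 * d - 0 - b := by linarith
  have h6 : 0 < 1 - d - b := by linarith
  have hdb : 0 ≤ d - b := by linarith
  rw [W9hat, W9hat]
  have g1 : (1 - d - a) * (d - a) / ((1 - 2 * d - a) * (1 - 2 * d)) ≤
      (1 - d - 0) * (d - 0) / ((1 - 2 * d - 0) * (1 - 2 * d)) := by
    rw [div_le_div_iff₀ (mul_pos h2 h1) (mul_pos h20 h1)]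
    have := mul_le_mul_of_nonneg_right (aux_key1 d a hdl hdu ha0 had) h1.le
    linarith [this]
  have hK : 0 ≤ (d - b) * ((1 - 2 * d - b) * (1 - 2 * d) * (1 - d - b)) := by positivity
  have g2 : (1 - d - a) ^ 2 * (1 - 2 * d - a) * (d - b) /
        ((1 - 2 * d - a - b) * (1 - 2 * d - b) * (1 - 2 * d) * (1 - d - b)) ≤
      (1 - d - 0) ^ 2 * (1 - 2 * d - 0) * (d - b) /
        ((1 - 2 * d - 0 - b) * (1 - 2 * d - b) * (1 - 2 * d) * (1 - d - b)) := by
    rw [div_le_div_iff₀ (mul_pos (mul_pos (mul_pos h4 h3) h1) h6)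
      (mul_pos (mul_pos (mul_pos h40 h3) h1) h6)]
    have := mul_le_mul_of_nonneg_left (aux_keyP2 d a b hdl hdu ha0 had hb0 hbd) hK
    linarith [this]
  have g3 : (1 - d - a) * (d - a) / ((1 - 2 * d - a - b) * (1 - 2 * d)) ≤
      (1 - d - 0) * (d - 0) / ((1 - 2 * d - 0 - b) * (1 - 2 * d)) := by
    rw [div_le_div_iff₀ (mul_pos h4 h1) (mul_pos h40 h1)]
    have := mul_le_mul_of_nonneg_right (aux_key3 d a b hdl hdu ha0 had hb0 hbd) h1.le
    linarith [this]
  exact add_le_add (add_le_add g1 g2) g3
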